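/- Let F be a finite nonempty type, let P be an F-by-F real matrix with nonnegative entries such that every row of P sums to 1, let α be a real number with 0 < α < 1, let w : F → ℝ satisfy w(i) = 1 for all i and the detailed-balance condition P[i,j] = P[j,i] for all i, j, and let s : F → ℝ satisfy s(i) ≥ √2 for all i. For an integer t ≥ 0, define R = ∑_{ℓ=0}^{∞} (1−α)·α^ℓ · P^ℓ and its truncation R_t = ∑_{ℓ=0}^{t} (1−α)·α^ℓ · P^ℓ, and set C(e) = ∑_{i ∈ F} R[i,e]/s(i) and C'_t(e) = ∑_{i ∈ F} R_t[i,e]/s(i). Then for every e ∈ F: 0 ≤ C(e) − C'_t(e) ≤ α^{t+1} / √2. -/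

import Mathlib

open Matrix Finset

set_option maxHeartbeats 1000000 in
/-- Unweighted-network case of the EdgeRAKE approximation guarantee: with all
edge weights equal to 1, `P` symmetric, and `s i ≥ √2`, the truncation error is between `0`
and `α^{t+1}/√2`. -/
theorem stmt_14 {F : Type*} [Fintype F] [Nonempty F] [DecidableEq F]
    (P : Matrix F F ℝ)
    (hP : ∀ i j, 0 ≤ P i j)
    (hrow : ∀ i, ∑ j, P i j = 1)
    (α : ℝ) (hα : 0 < α) (hα1 : α < 1)
    (w : F → ℝ) (hw : ∀ i, w i = 1)
    (hdb : ∀ i j, P i j = P j i)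
    (s : F → ℝ) (hs : ∀ i, Real.sqrt 2 ≤ s i)
    (t : ℕ)
    (R : Matrix F F ℝ) (hR : R = ∑' ℓ : ℕ, ((1 - α) * α ^ ℓ) • P ^ ℓ)
    (Rt : Matrix F F ℝ) (hRt : Rt = ∑ ℓ ∈ Finset.range (t + 1), ((1 - α) * α ^ ℓ) • P ^ ℓ)
    (C C' : F → ℝ)
    (hC : ∀ e, C e = ∑ i, R i e / s i)
    (hC' : ∀ e, C' e = ∑ i, Rt i e / s i) :
    ∀ e, 0 ≤ C e - C' e ∧ C e - C' e ≤ α ^ (t + 1) / Real.sqrt 2 := by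
  intro e
  have h2 : (0:ℝ) < Real.sqrt 2 := by positivity
  have hspos : ∀ i, (0:ℝ) < s i := fun i => lt_of_lt_of_le h2 (hs i)
  -- nonnegativity of powers
  have hpow_nonneg : ∀ (ℓ : ℕ) (i j : F), 0 ≤ (P ^ ℓ) i j := by
    intro ℓ
    induction ℓ with
    | zero =>
      intro i j
      simp only [pow_zero, Matrix.one_apply]
      split <;> norm_num
    | succ n ih =>
      intro i j
      rw [pow_succ, Matrix.mul_apply]
      exact Finset.sum_nonneg fun k _ => mul_nonneg (ih i k) (hP k j)
  -- column sums of powers are 1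
  have hcol : ∀ (ℓ : ℕ) (j : F), ∑ i, (P ^ ℓ) i j = 1 := by
    intro ℓ
    induction ℓ with
    | zero =>
      intro j
      simp [Matrix.one_apply]
    | succ n ih =>
      intro j
      have : ∀ i : F, (P ^ (n+1)) i j = ∑ k, (P ^ n) i k * P k j := by
        intro i; rw [pow_succ, Matrix.mul_apply]
      simp_rw [this]
      rw [Finset.sum_comm]
      have : ∀ k : F, ∑ i, (P ^ n) i k * P k j = P k j := by
        intro k; rw [← Finset.sum_mul, ih k, one_mul]
      simp_rw [this]
      have : ∀ k : F, P k j = P j k := fun k => hdb k j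
      simp_rw [this]
      exact hrow j
  -- entries of powers are ≤ 1
  have hpow_le : ∀ (ℓ : ℕ) (i j : F), (P ^ ℓ) i j ≤ 1 := by
    intro ℓ i j
    calc (P ^ ℓ) i j ≤ ∑ i', (P ^ ℓ) i' j :=
          Finset.single_le_sum (fun i' _ => hpow_nonneg ℓ i' j) (Finset.mem_univ i)
      _ = 1 := hcol ℓ j
  -- summability of entries
  have hgeo : Summable (fun ℓ : ℕ => (1 - α) * α ^ ℓ) :=
    (summable_geometric_of_lt_one hα.le hα1).mul_left (1 - α)
  have h1α : 0 < 1 - α := by linarith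
  have hentry_sum : ∀ i j : F, Summable (fun ℓ : ℕ => ((1 - α) * α ^ ℓ) * (P ^ ℓ) i j) := by
    intro i j
    refine Summable.of_nonneg_of_le (fun ℓ => ?_) (fun ℓ => ?_) hgeo
    · exact mul_nonneg (mul_nonneg h1α.le (pow_nonneg hα.le ℓ)) (hpow_nonneg ℓ i j)
    · calc ((1 - α) * α ^ ℓ) * (P ^ ℓ) i j ≤ ((1 - α) * α ^ ℓ) * 1 :=
            mul_le_mul_of_nonneg_left (hpow_le ℓ i j)
              (mul_nonneg h1α.le (pow_nonneg hα.le ℓ))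
        _ = (1 - α) * α ^ ℓ := mul_one _
  have hMsum : Summable (fun ℓ : ℕ => ((1 - α) * α ^ ℓ) • P ^ ℓ) := by
    refine Pi.summable.2 fun i => Pi.summable.2 fun j => ?_
    exact hentry_sum i j
  have hRentry : ∀ i j : F, R i j = ∑' ℓ : ℕ, ((1 - α) * α ^ ℓ) * (P ^ ℓ) i j := by
    intro i j
    rw [hR]
    exact (congrFun (tsum_apply (f := fun ℓ : ℕ => ((((1 - α) * α ^ ℓ) • P ^ ℓ : Matrix F F ℝ) : F → F → ℝ)) hMsum) j).trans
      (tsum_apply (Pi.summable.1 hMsum i))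
  have hRtentry : ∀ i j : F, Rt i j =
      ∑ ℓ ∈ Finset.range (t + 1), ((1 - α) * α ^ ℓ) * (P ^ ℓ) i j := by
    intro i j
    rw [hRt]
    simp [Matrix.sum_apply]
  -- the difference per entry is the tail sum
  have hdiff : ∀ i : F, R i e - Rt i e =
      ∑' ℓ : ℕ, ((1 - α) * α ^ (ℓ + (t+1))) * (P ^ (ℓ + (t+1))) i e := by
    intro i
    rw [hRentry i e, hRtentry i e]
    have := (Summable.sum_add_tsum_nat_add (f := fun ℓ => ((1 - α) * α ^ ℓ) * (P ^ ℓ) i e) (t+1)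
      (hentry_sum i e)).symm
    linarith [this]
  -- assemble
  have hCdiff : C e - C' e = ∑ i, (∑' ℓ : ℕ, ((1 - α) * α ^ (ℓ + (t+1))) * (P ^ (ℓ + (t+1))) i e) / s i := by
    rw [hC, hC', ← Finset.sum_sub_distrib]
    congr 1; funext i
    rw [div_sub_div_same, hdiff i]
  -- rewrite each term: divide inside the tsum, then swap sum and tsum
  have htail_sum : ∀ i : F, Summable (fun ℓ : ℕ => ((1 - α) * α ^ (ℓ + (t+1))) * (P ^ (ℓ + (t+1))) i e) := by
    intro i
    refine Summable.of_nonneg_of_le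
      (fun ℓ => mul_nonneg (mul_nonneg h1α.le (pow_nonneg hα.le _)) (hpow_nonneg _ i e))
      (fun ℓ => ?_) hgeo
    calc ((1 - α) * α ^ (ℓ + (t+1))) * (P ^ (ℓ + (t+1))) i e
        ≤ ((1 - α) * α ^ (ℓ + (t+1))) * 1 :=
          mul_le_mul_of_nonneg_left (hpow_le _ i e)
            (mul_nonneg h1α.le (pow_nonneg hα.le _))
      _ = (1 - α) * α ^ (ℓ + (t+1)) := mul_one _
      _ ≤ (1 - α) * α ^ ℓ :=
          mul_le_mul_of_nonneg_left
            (pow_le_pow_of_le_one hα.le hα1.le (Nat.le_add_right ℓ (t+1))) h1α.le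
  have hswap : C e - C' e =
      ∑' ℓ : ℕ, ∑ i, ((1 - α) * α ^ (ℓ + (t+1))) * (P ^ (ℓ + (t+1))) i e / s i := by
    rw [hCdiff]
    have h1 : (∑ i, (∑' ℓ : ℕ, ((1 - α) * α ^ (ℓ + (t+1))) * (P ^ (ℓ + (t+1))) i e) / s i)
        = ∑ i, ∑' ℓ : ℕ, ((1 - α) * α ^ (ℓ + (t+1))) * (P ^ (ℓ + (t+1))) i e / s i :=
      Finset.sum_congr rfl fun i _ => tsum_div_const.symm
    rw [h1]
    exact (Summable.tsum_finsetSum (f := fun (i : F) (ℓ : ℕ) =>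
      ((1 - α) * α ^ (ℓ + (t+1))) * (P ^ (ℓ + (t+1))) i e / s i)
      (fun i _ => (htail_sum i).div_const (s i))).symm
  constructor
  · rw [hswap]
    refine tsum_nonneg fun ℓ => Finset.sum_nonneg fun i _ => ?_
    exact div_nonneg (mul_nonneg (mul_nonneg h1α.le (pow_nonneg hα.le _)) (hpow_nonneg _ i e))
      (hspos i).le
  · rw [hswap]
    have hterm : ∀ ℓ : ℕ, ∑ i, ((1 - α) * α ^ (ℓ + (t+1))) * (P ^ (ℓ + (t+1))) i e / s i
        ≤ ((1 - α) * α ^ (t+1) / Real.sqrt 2) * α ^ ℓ := by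
      intro ℓ
      have step : ∀ i : F, ((1 - α) * α ^ (ℓ + (t+1))) * (P ^ (ℓ + (t+1))) i e / s i
          ≤ ((1 - α) * α ^ (ℓ + (t+1))) * (P ^ (ℓ + (t+1))) i e / Real.sqrt 2 := by
        intro i
        apply div_le_div_of_nonneg_left _ h2 (hs i)
        exact mul_nonneg (mul_nonneg h1α.le (pow_nonneg hα.le _)) (hpow_nonneg _ i e)
      calc ∑ i, ((1 - α) * α ^ (ℓ + (t+1))) * (P ^ (ℓ + (t+1))) i e / s i
          ≤ ∑ i, ((1 - α) * α ^ (ℓ + (t+1))) * (P ^ (ℓ + (t+1))) i e / Real.sqrt 2 :=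
            Finset.sum_le_sum fun i _ => step i
        _ = (1 - α) * α ^ (ℓ + (t+1)) / Real.sqrt 2 := by
            rw [← Finset.sum_div, ← Finset.mul_sum, hcol, mul_one]
        _ = ((1 - α) * α ^ (t+1) / Real.sqrt 2) * α ^ ℓ := by
            rw [pow_add]; ring
    have hmaj : Summable (fun ℓ : ℕ => ((1 - α) * α ^ (t+1) / Real.sqrt 2) * α ^ ℓ) :=
      (summable_geometric_of_lt_one hα.le hα1).mul_left _
    have hlhs : Summable (fun ℓ : ℕ =>
        ∑ i, ((1 - α) * α ^ (ℓ + (t+1))) * (P ^ (ℓ + (t+1))) i e / s i) := by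
      refine Summable.of_nonneg_of_le (fun ℓ => Finset.sum_nonneg fun i _ =>
        div_nonneg (mul_nonneg (mul_nonneg h1α.le (pow_nonneg hα.le _)) (hpow_nonneg _ i e))
          (hspos i).le) hterm hmaj
    calc (∑' ℓ : ℕ, ∑ i, ((1 - α) * α ^ (ℓ + (t+1))) * (P ^ (ℓ + (t+1))) i e / s i)
        ≤ ∑' ℓ : ℕ, ((1 - α) * α ^ (t+1) / Real.sqrt 2) * α ^ ℓ :=
          Summable.tsum_le_tsum hterm hlhs hmaj
      _ = ((1 - α) * α ^ (t+1) / Real.sqrt 2) * (1 - α)⁻¹ := by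
          rw [tsum_mul_left, tsum_geometric_of_lt_one hα.le hα1]
      _ = α ^ (t+1) / Real.sqrt 2 := by
          field_simp
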